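/- Let 0 < β < α and r ∈ ℝ. Then the minimizer of w ↦ (1/(2β))(r − w)² + ρ_α(w) over ℝ is unique and given by the firm thresholding operator: 0 if |r| ≤ β; (α/(α−β))(1 − β/|r|)·r if β < |r| ≤ α; and r if |r| > α. -/

import Mathlib

/-- Scaled minimax concave penalty. -/
noncomputable def mcp (α w : ℝ) : ℝ :=
  if |w| ≤ α then |w| - w ^ 2 / (2 * α) else α / 2

/-- Firm thresholding operator with parameters `β < α`. -/
noncomputable def firm (α β r : ℝ) : ℝ :=
  if |r| ≤ β then 0
  else if |r| ≤ α then (α / (α - β)) * (1 - β / |r|) * r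
  else r

lemma mcp_lb (α : ℝ) (hα : 0 < α) (s v : ℝ) :
    |v| - |s| - (v - s) ^ 2 / (2 * α) ≤ mcp α v := by
  unfold mcp
  split_ifs with h
  · have h1 : v * s ≤ |v| * |s| := by
      calc v * s ≤ |v * s| := le_abs_self _
        _ = |v| * |s| := abs_mul v s
    have h2 : 0 ≤ |s| := abs_nonneg s
    have hd : (v ^ 2 - (v - s) ^ 2) / (2 * α) ≤ |s| := by
      rw [div_le_iff₀ (by positivity)]
      nlinarith [h1, mul_nonneg (sub_nonneg.mpr h) h2, sq_nonneg s]
    rw [sub_div] at hd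
    linarith
  · push_neg at h
    have h1 : |v| - |s| ≤ |v - s| := abs_sub_abs_le_abs_sub v s
    have h2 : (|v - s|) ^ 2 = (v - s) ^ 2 := sq_abs _
    have h3 : 0 ≤ |v - s| := abs_nonneg _
    have h5 : 2 * α * (|v| - |s|) ≤ 2 * α * |v - s| :=
      mul_le_mul_of_nonneg_left h1 (by positivity)
    have key : 2 * α * (|v| - |s|) - (v - s) ^ 2 ≤ α ^ 2 := by
      nlinarith [h5, sq_nonneg (|v - s| - α), h2]
    have e : (2 * α * (|v| - |s|) - α ^ 2) / (2 * α) = |v| - |s| - α / 2 := by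
      field_simp
    have h4 : (2 * α * (|v| - |s|) - α ^ 2) / (2 * α) ≤ (v - s) ^ 2 / (2 * α) := by
      gcongr
      linarith
    linarith [h4, e.symm.le, e.le]

lemma prox_aux (α β : ℝ) (hβ : 0 < β) (hβα : β < α) (r t s σ : ℝ)
    (hσ : |σ| ≤ 1) (hσt : σ * t = |t|)
    (hgrad : α * (t - r) - β * (t - s) + α * β * σ = 0)
    (hval : mcp α t = |t| - |s| - (t - s) ^ 2 / (2 * α))
    (v : ℝ) (hv : v ≠ t) :
    1 / (2 * β) * (r - t) ^ 2 + mcp α t < 1 / (2 * β) * (r - v) ^ 2 + mcp α v := by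
  have hα : 0 < α := hβ.trans hβα
  have hA : |v| - |s| - (v - s) ^ 2 / (2 * α) ≤ mcp α v := mcp_lb α hα s v
  have hvt : 0 < (v - t) ^ 2 := by
    have h := sub_ne_zero.mpr hv
    positivity
  have hσv : σ * v ≤ |v| := by
    calc σ * v ≤ |σ * v| := le_abs_self _
      _ = |σ| * |v| := abs_mul _ _
      _ ≤ 1 * |v| := mul_le_mul_of_nonneg_right hσ (abs_nonneg v)
      _ = |v| := one_mul _
  have key : α * (r - t) ^ 2 - β * (t - s) ^ 2 + 2 * α * β * |t| <
      α * (r - v) ^ 2 - β * (v - s) ^ 2 + 2 * α * β * |v| := by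
    have h0 : (v - t) * (α * (t - r) - β * (t - s) + α * β * σ) = 0 := by
      rw [hgrad]; ring
    nlinarith [hvt, hσv, hσt, mul_pos hα hβ, sub_pos.mpr hβα, h0]
  have e1 : 1 / (2 * β) * (r - t) ^ 2 + mcp α t =
      (α * (r - t) ^ 2 - β * (t - s) ^ 2 + 2 * α * β * |t|) / (2 * α * β) - |s| := by
    rw [hval]; field_simp; ring
  have e2 : (α * (r - v) ^ 2 - β * (v - s) ^ 2 + 2 * α * β * |v|) / (2 * α * β) - |s| =
      1 / (2 * β) * (r - v) ^ 2 + (|v| - |s| - (v - s) ^ 2 / (2 * α)) := by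
    field_simp; ring
  calc 1 / (2 * β) * (r - t) ^ 2 + mcp α t
      = (α * (r - t) ^ 2 - β * (t - s) ^ 2 + 2 * α * β * |t|) / (2 * α * β) - |s| := e1
    _ < (α * (r - v) ^ 2 - β * (v - s) ^ 2 + 2 * α * β * |v|) / (2 * α * β) - |s| := by
        gcongr
    _ = 1 / (2 * β) * (r - v) ^ 2 + (|v| - |s| - (v - s) ^ 2 / (2 * α)) := e2
    _ ≤ 1 / (2 * β) * (r - v) ^ 2 + mcp α v := by linarith

lemma firm_strict (α β : ℝ) (hβ : 0 < β) (hβα : β < α) (r v : ℝ)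
    (hv : v ≠ firm α β r) :
    1 / (2 * β) * (r - firm α β r) ^ 2 + mcp α (firm α β r) <
      1 / (2 * β) * (r - v) ^ 2 + mcp α v := by
  have hα : 0 < α := hβ.trans hβα
  have haβ : 0 < α - β := sub_pos.mpr hβα
  unfold firm at hv ⊢
  split_ifs at hv ⊢ with h1 h2
  · -- |r| ≤ β
    refine prox_aux α β hβ hβα r 0 0 (r / β) ?_ ?_ ?_ ?_ v hv
    · rw [abs_div, abs_of_pos hβ, div_le_one hβ]; exact h1
    · simp
    · field_simp
      ring
    · simp [mcp, hα.le]
  · -- β < |r| ≤ α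
    push_neg at h1
    have ha0 : 0 < |r| := hβ.trans h1
    have hr0 : r ≠ 0 := by
      intro h; rw [h, abs_zero] at ha0; exact lt_irrefl 0 ha0
    have hc : 0 ≤ α / (α - β) * (1 - β / |r|) := by
      apply mul_nonneg (by positivity)
      have : β / |r| ≤ 1 := (div_le_one ha0).mpr h1.le
      linarith
    have habs : |α / (α - β) * (1 - β / |r|) * r| = α / (α - β) * (1 - β / |r|) * |r| := by
      rw [abs_mul, abs_of_nonneg hc]
    refine prox_aux α β hβ hβα r _ 0 (r / |r|) ?_ ?_ ?_ ?_ v hv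
    · rw [abs_div, abs_abs, div_self ha0.ne']
    · rw [habs]
      field_simp
      linear_combination (-1 : ℝ) * sq_abs r
    · field_simp
      ring
    · have ht : |α / (α - β) * (1 - β / |r|) * r| ≤ α := by
        rw [habs]
        have e : α / (α - β) * (1 - β / |r|) * |r| = α * (|r| - β) / (α - β) := by
          field_simp
        rw [e, div_le_iff₀ haβ]
        nlinarith [h2]
      rw [mcp, if_pos ht]
      simp
  · -- |r| > α
    push_neg at h2
    have ha0 : 0 < |r| := hα.trans h2
    have hr0 : r ≠ 0 := by
      intro h; rw [h, abs_zero] at ha0; exact lt_irrefl 0 ha0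
    have hσsq : (r / |r|) ^ 2 = 1 := by
      rw [div_pow, sq_abs, div_self (by positivity)]
    refine prox_aux α β hβ hβα r r (r - r / |r| * α) (r / |r|) ?_ ?_ ?_ ?_ v hv
    · rw [abs_div, abs_abs, div_self ha0.ne']
    · field_simp
      exact (sq_abs r).symm
    · ring
    · have hs : |r - r / |r| * α| = |r| - α := by
        rw [show r - r / |r| * α = r * ((|r| - α) / |r|) by field_simp,
          abs_mul, abs_of_nonneg (div_nonneg (by linarith) (abs_nonneg r))]
        field_simp
      have h3 : (r - (r - r / |r| * α)) ^ 2 = α ^ 2 := by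
        rw [show r - (r - r / |r| * α) = r / |r| * α by ring, mul_pow, hσsq, one_mul]
      rw [mcp, if_neg (not_le.mpr h2), hs, h3]
      field_simp
      ring

theorem prox_mcp_firm (α β : ℝ) (hβ : 0 < β) (hβα : β < α) (r : ℝ) :
    {w : ℝ | ∀ v : ℝ, 1 / (2 * β) * (r - w) ^ 2 + mcp α w ≤
        1 / (2 * β) * (r - v) ^ 2 + mcp α v} = {firm α β r} := by
  ext w
  simp only [Set.mem_setOf_eq, Set.mem_singleton_iff]
  constructor
  · intro hw
    by_contra hne
    exact absurd (hw (firm α β r)) (not_le.mpr (firm_strict α β hβ hβα r w hne))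
  · rintro rfl v
    rcases eq_or_ne v (firm α β r) with h | h
    · rw [h]
    · exact (firm_strict α β hβ hβα r v h).le
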